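/- Let R be a reduced crystallographic root system with simple roots α₁,…,αₙ and Weyl group W, and let P = Conv(W(a)) for a ∈ C. Each vertex a of P lies on exactly the n facets Conv(W_{[n]∖{i}}(a)), i = 1,…,n, whose inward normal vectors are −ω_i∨; hence P is a simple polytope. -/

import Mathlib

open scoped InnerProductSpace

noncomputable section

structure RootSystemData (V : Type) [NormedAddCommGroup V] [InnerProductSpace ℝ V] (n : ℕ) where
  R : Set V
  α : Fin n → V
  finite : R.Finite
  root_ne_zero : ∀ β ∈ R, β ≠ (0 : V)
  reduced : ∀ β ∈ R, ∀ t : ℝ, t • β ∈ R → t = 1 ∨ t = -1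
  reflect_mem : ∀ β ∈ R, ∀ γ ∈ R, γ - (2 * ⟪γ, β⟫_ℝ / ⟪β, β⟫_ℝ) • β ∈ R
  cryst : ∀ β ∈ R, ∀ γ ∈ R, ∃ k : ℤ, 2 * ⟪γ, β⟫_ℝ / ⟪β, β⟫_ℝ = (k : ℝ)
  simple_mem : ∀ i, α i ∈ R
  indep : LinearIndependent ℝ α
  spanning : Submodule.span ℝ (Set.range α) = ⊤
  base : ∀ β ∈ R, (∃ c : Fin n → ℝ, (∀ i, 0 ≤ c i) ∧ β = ∑ i, c i • α i) ∨
      (∃ c : Fin n → ℝ, (∀ i, c i ≤ 0) ∧ β = ∑ i, c i • α i)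

namespace RootSystemData

variable {V : Type} [NormedAddCommGroup V] [InnerProductSpace ℝ V] {n : ℕ}
variable (D : RootSystemData V n)

def coroot (i : Fin n) : V := (2 / ⟪D.α i, D.α i⟫_ℝ) • D.α i

def IsSimpleReflection (i : Fin n) (g : V ≃ₗ[ℝ] V) : Prop :=
  ∀ v, g v = v - (2 * ⟪v, D.α i⟫_ℝ / ⟪D.α i, D.α i⟫_ℝ) • D.α i

def WK (K : Set (Fin n)) : Subgroup (V ≃ₗ[ℝ] V) :=
  Subgroup.closure {g | ∃ i ∈ K, D.IsSimpleReflection i g}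

def W : Subgroup (V ≃ₗ[ℝ] V) := D.WK Set.univ

def C : Set V := {x | ∀ i, 0 < ⟪x, D.α i⟫_ℝ}

def closedC : Set V := {x | ∀ i, 0 ≤ ⟪x, D.α i⟫_ℝ}

def orbit (K : Set (Fin n)) (a : V) : Set V := {x | ∃ g ∈ D.WK K, g a = x}

def F (a : V) (i : Fin n) : Set V := convexHull ℝ (D.orbit {i}ᶜ a)

def P (a : V) : Set V := convexHull ℝ (D.orbit Set.univ a)

def H (i : Fin n) : Set V := {x | ⟪x, D.α i⟫_ℝ = 0}

end RootSystemData

/-- A set `G` is a face of a convex set `A` if it is a nonempty convex extreme subset. -/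
def IsFaceOf {V : Type} [NormedAddCommGroup V] [InnerProductSpace ℝ V] (A G : Set V) : Prop :=
  Convex ℝ G ∧ IsExtreme ℝ A G ∧ G.Nonempty

/-- A facet is a maximal proper face. -/
def IsFacetOf {V : Type} [NormedAddCommGroup V] [InnerProductSpace ℝ V] (A G : Set V) : Prop :=
  IsFaceOf A G ∧ G ≠ A ∧ ∀ G' : Set V, IsFaceOf A G' → G ⊆ G' → G' = G ∨ G' = A


namespace RootSystemData

variable {V : Type} [NormedAddCommGroup V] [InnerProductSpace ℝ V] {n : ℕ}
variable (D : RootSystemData V n)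

lemma alpha_ne_zero (i : Fin n) : D.α i ≠ 0 := D.root_ne_zero _ (D.simple_mem i)

lemma inner_alpha_pos (i : Fin n) : 0 < ⟪D.α i, D.α i⟫_ℝ := by
  have h : D.α i ≠ 0 := D.alpha_ne_zero i
  have := real_inner_self_eq_norm_sq (D.α i)
  nlinarith [norm_pos_iff.2 h, real_inner_self_eq_norm_sq (D.α i)]

/-- The reflection in the simple root `α i`, as a linear map. -/
def srefAux (i : Fin n) : V →ₗ[ℝ] V :=
  LinearMap.id - (((2 / ⟪D.α i, D.α i⟫_ℝ) • ((innerSL ℝ (D.α i) : V →L[ℝ] ℝ) : V →ₗ[ℝ] ℝ)).smulRight (D.α i))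

lemma srefAux_apply (i : Fin n) (v : V) :
    D.srefAux i v = v - (2 * ⟪v, D.α i⟫_ℝ / ⟪D.α i, D.α i⟫_ℝ) • D.α i := by
  simp [srefAux, LinearMap.smulRight_apply, real_inner_comm (D.α i) v]
  match_scalars <;> ring

lemma srefAux_invol (i : Fin n) : Function.Involutive (D.srefAux i) := by
  intro v
  have hA : ⟪D.α i, D.α i⟫_ℝ ≠ 0 := ne_of_gt (D.inner_alpha_pos i)
  rw [srefAux_apply, srefAux_apply]
  rw [inner_sub_left, real_inner_smul_left]
  match_scalars <;> (field_simp; try ring)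

def sref (i : Fin n) : V ≃ₗ[ℝ] V := LinearEquiv.ofInvolutive (D.srefAux i) (D.srefAux_invol i)

lemma sref_apply (i : Fin n) (v : V) :
    D.sref i v = v - (2 * ⟪v, D.α i⟫_ℝ / ⟪D.α i, D.α i⟫_ℝ) • D.α i := D.srefAux_apply i v

end RootSystemData
namespace RootSystemData

variable {V : Type} [NormedAddCommGroup V] [InnerProductSpace ℝ V] {n : ℕ}
variable (D : RootSystemData V n)

lemma isSimpleReflection_iff (i : Fin n) (g : V ≃ₗ[ℝ] V) :
    D.IsSimpleReflection i g ↔ g = D.sref i := by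
  constructor
  · intro h
    ext v
    rw [h v, D.sref_apply]
  · rintro rfl v
    exact D.sref_apply i v

lemma WK_eq_closure (K : Set (Fin n)) : D.WK K = Subgroup.closure (D.sref '' K) := by
  unfold WK
  congr 1
  ext g
  simp only [Set.mem_setOf_eq, Set.mem_image]
  constructor
  · rintro ⟨i, hi, h⟩
    exact ⟨i, hi, ((D.isSimpleReflection_iff i g).1 h).symm⟩
  · rintro ⟨i, hi, h⟩
    exact ⟨i, hi, (D.isSimpleReflection_iff i g).2 h.symm⟩

lemma sref_mem_WK {K : Set (Fin n)} {i : Fin n} (h : i ∈ K) : D.sref i ∈ D.WK K := by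
  rw [D.WK_eq_closure]
  exact Subgroup.subset_closure ⟨i, h, rfl⟩

lemma WK_mono {K K' : Set (Fin n)} (h : K ⊆ K') : D.WK K ≤ D.WK K' := by
  rw [D.WK_eq_closure, D.WK_eq_closure]
  exact Subgroup.closure_mono (Set.image_mono h)

lemma sref_sref (i : Fin n) (v : V) : D.sref i (D.sref i v) = v := D.srefAux_invol i v

lemma sref_mul_self (i : Fin n) : D.sref i * D.sref i = 1 := by
  ext v; exact D.sref_sref i v

lemma sref_inv (i : Fin n) : (D.sref i)⁻¹ = D.sref i := by
  rw [eq_comm, eq_inv_iff_mul_eq_one, D.sref_mul_self]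

lemma inner_sref (i : Fin n) (x y : V) : ⟪D.sref i x, D.sref i y⟫_ℝ = ⟪x, y⟫_ℝ := by
  have hA : ⟪D.α i, D.α i⟫_ℝ ≠ 0 := ne_of_gt (D.inner_alpha_pos i)
  rw [D.sref_apply, D.sref_apply, inner_sub_left, inner_sub_right, inner_sub_right,
    real_inner_smul_left, real_inner_smul_left, real_inner_smul_right, real_inner_smul_right,
    real_inner_comm (D.α i) y]
  field_simp
  ring

lemma inner_WK {K : Set (Fin n)} {g : V ≃ₗ[ℝ] V} (hg : g ∈ D.WK K) (x y : V) :
    ⟪g x, g y⟫_ℝ = ⟪x, y⟫_ℝ := by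
  rw [D.WK_eq_closure] at hg
  induction hg using Subgroup.closure_induction generalizing x y with
  | mem g hg =>
    obtain ⟨i, _, rfl⟩ := hg
    exact D.inner_sref i x y
  | one => rfl
  | mul g h _ _ hg hh => rw [show (g * h) x = g (h x) from rfl, show (g * h) y = g (h y) from rfl,
      hg, hh]
  | inv g hgm hg =>
    have := hg (g⁻¹ x) (g⁻¹ y)
    rwa [show g (g⁻¹ x) = x from g.apply_symm_apply x,
      show g (g⁻¹ y) = y from g.apply_symm_apply y, eq_comm] at this

lemma inner_WK' {K : Set (Fin n)} {g : V ≃ₗ[ℝ] V} (hg : g ∈ D.WK K) (x y : V) :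
    ⟪g x, y⟫_ℝ = ⟪x, g⁻¹ y⟫_ℝ := by
  conv_lhs => rw [show y = g (g⁻¹ y) from (g.apply_symm_apply y).symm]
  exact D.inner_WK hg x (g⁻¹ y)

lemma sref_root {i : Fin n} {β : V} (hβ : β ∈ D.R) : D.sref i β ∈ D.R := by
  rw [D.sref_apply]
  exact D.reflect_mem _ (D.simple_mem i) _ hβ

lemma WK_maps_R {K : Set (Fin n)} {g : V ≃ₗ[ℝ] V} (hg : g ∈ D.WK K) :
    ∀ β ∈ D.R, g β ∈ D.R := by
  rw [D.WK_eq_closure] at hg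
  have main : ∀ β ∈ D.R, g β ∈ D.R ∧ g⁻¹ β ∈ D.R := by
    induction hg using Subgroup.closure_induction with
    | mem g hg =>
      obtain ⟨i, _, rfl⟩ := hg
      intro β hβ
      refine ⟨D.sref_root hβ, ?_⟩
      rw [D.sref_inv]
      exact D.sref_root hβ
    | one => intro β hβ; exact ⟨hβ, hβ⟩
    | mul g h _ _ hg hh =>
      intro β hβ
      constructor
      · exact (hg _ ((hh _ hβ).1)).1
      · show h⁻¹ (g⁻¹ β) ∈ D.R
        exact (hh _ ((hg _ hβ).2)).2
    | inv g _ hg =>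
      intro β hβ
      refine ⟨(hg _ hβ).2, ?_⟩
      rw [inv_inv]
      exact (hg _ hβ).1
  exact fun β hβ => (main β hβ).1

lemma exists_word {K : Set (Fin n)} {g : V ≃ₗ[ℝ] V} (hg : g ∈ D.WK K) :
    ∃ l : List (Fin n), (∀ j ∈ l, j ∈ K) ∧ g = (l.map D.sref).prod := by
  rw [D.WK_eq_closure] at hg
  induction hg using Subgroup.closure_induction with
  | mem g hg =>
    obtain ⟨i, hi, rfl⟩ := hg
    exact ⟨[i], by simpa using hi, by simp⟩
  | one => exact ⟨[], by simp, by simp⟩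
  | mul g h _ _ hg hh =>
    obtain ⟨l₁, hl₁, rfl⟩ := hg
    obtain ⟨l₂, hl₂, rfl⟩ := hh
    refine ⟨l₁ ++ l₂, ?_, by simp⟩
    intro j hj
    rcases List.mem_append.1 hj with h | h
    · exact hl₁ j h
    · exact hl₂ j h
  | inv g _ hg =>
    obtain ⟨l, hl, rfl⟩ := hg
    refine ⟨l.reverse, fun j hj => hl j (List.mem_reverse.1 hj), ?_⟩
    rw [List.prod_inv_reverse]
    congr 1
    rw [List.map_reverse]
    congr 1
    simp [D.sref_inv]

lemma word_mem_WK {K : Set (Fin n)} {l : List (Fin n)} (hl : ∀ j ∈ l, j ∈ K) :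
    (l.map D.sref).prod ∈ D.WK K := by
  induction l with
  | nil => simp
  | cons i l ih =>
    simp only [List.map_cons, List.prod_cons]
    exact Subgroup.mul_mem _ (D.sref_mem_WK (hl i (by simp))) (ih fun j hj => hl j (by simp [hj]))

end RootSystemData
namespace RootSystemData

variable {V : Type} [NormedAddCommGroup V] [InnerProductSpace ℝ V] {n : ℕ}
variable (D : RootSystemData V n)

lemma inner_root_pos {β : V} (hβ : β ∈ D.R) : 0 < ⟪β, β⟫_ℝ := by
  have h : β ≠ 0 := D.root_ne_zero _ hβ
  nlinarith [norm_pos_iff.2 h, real_inner_self_eq_norm_sq β]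

lemma neg_mem {β : V} (hβ : β ∈ D.R) : -β ∈ D.R := by
  have h := D.reflect_mem β hβ β hβ
  have hne : ⟪β, β⟫_ℝ ≠ 0 := ne_of_gt (D.inner_root_pos hβ)
  have : β - (2 * ⟪β, β⟫_ℝ / ⟪β, β⟫_ℝ) • β = -β := by
    rw [mul_div_assoc, div_self hne, mul_one]
    module
  rwa [this] at h

/-- The basis given by the simple roots. -/
def B : Module.Basis (Fin n) ℝ V := Module.Basis.mk D.indep (by rw [D.spanning])

lemma B_eq (i : Fin n) : D.B i = D.α i := Module.Basis.mk_apply _ _ _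

section Omega

variable (ω : Fin n → V) (hω : ∀ i j, ⟪ω i, D.α j⟫_ℝ = if i = j then 1 else 0)

include hω

lemma coord_eq {v : V} {c : Fin n → ℝ} (h : v = ∑ j, c j • D.α j) (i : Fin n) :
    ⟪v, ω i⟫_ℝ = c i := by
  subst h
  rw [sum_inner]
  have : ∀ j, ⟪c j • D.α j, ω i⟫_ℝ = c j * (if i = j then 1 else 0) := by
    intro j
    rw [real_inner_smul_left, real_inner_comm, hω]
  simp only [this, mul_ite, mul_one, mul_zero]
  simp

lemma dual_expansion (v : V) : v = ∑ j, ⟪v, ω j⟫_ℝ • D.α j := by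
  have h : v = ∑ j, D.B.repr v j • D.α j := by
    conv_lhs => rw [← D.B.sum_repr v]
    congr 1
    ext j
    rw [D.B_eq]
  have h2 := D.coord_eq ω hω h
  conv_lhs => rw [h]
  exact Finset.sum_congr rfl fun j _ => by rw [h2 j]

/-- positivity of a root with respect to the simple system -/
def IsPos (β : V) : Prop := β ∈ D.R ∧ ∀ j, 0 ≤ ⟪β, ω j⟫_ℝ

lemma dichotomy {β : V} (hβ : β ∈ D.R) :
    D.IsPos ω β ∨ (∀ j, ⟪β, ω j⟫_ℝ ≤ 0) := by
  rcases D.base β hβ with ⟨c, hc, hrep⟩ | ⟨c, hc, hrep⟩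
  · left
    refine ⟨hβ, fun j => ?_⟩
    rw [D.coord_eq ω hω hrep]
    exact hc j
  · right
    intro j
    rw [D.coord_eq ω hω hrep]
    exact hc j

lemma isPos_neg {β : V} (hβ : β ∈ D.R) (h : ¬ D.IsPos ω β) : D.IsPos ω (-β) := by
  rcases D.dichotomy ω hω hβ with h' | h'
  · exact absurd h' h
  · refine ⟨D.neg_mem hβ, fun j => ?_⟩
    rw [inner_neg_left]
    linarith [h' j]

lemma inner_pos_of_isPos {a : V} (ha : a ∈ D.C) {β : V} (hβ : D.IsPos ω β) :
    0 < ⟪a, β⟫_ℝ := by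
  obtain ⟨hβR, hc⟩ := hβ
  have hrep := D.dual_expansion ω hω β
  have hval : ⟪a, β⟫_ℝ = ∑ j, ⟪β, ω j⟫_ℝ * ⟪a, D.α j⟫_ℝ := by
    conv_lhs => rw [hrep]
    rw [inner_sum]
    congr 1
    ext j
    rw [real_inner_smul_right]
  rw [hval]
  rcases lt_or_ge 0 (∑ j, ⟪β, ω j⟫_ℝ * ⟪a, D.α j⟫_ℝ) with h | h
  · exact h
  · exfalso
    have hterm : ∀ j ∈ Finset.univ, 0 ≤ ⟪β, ω j⟫_ℝ * ⟪a, D.α j⟫_ℝ := by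
      intro j _
      exact mul_nonneg (hc j) (le_of_lt (ha j))
    have hzero : ∑ j, ⟪β, ω j⟫_ℝ * ⟪a, D.α j⟫_ℝ = 0 :=
      le_antisymm h (Finset.sum_nonneg hterm)
    have hall := (Finset.sum_eq_zero_iff_of_nonneg hterm).1 hzero
    have hcz : ∀ j, ⟪β, ω j⟫_ℝ = 0 := by
      intro j
      have := hall j (Finset.mem_univ j)
      rcases mul_eq_zero.1 this with h' | h'
      · exact h'
      · exact absurd h' (ne_of_gt (ha j))
    apply D.root_ne_zero β hβR
    rw [hrep]
    apply Finset.sum_eq_zero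
    intro j _
    rw [hcz j, zero_smul]

lemma inner_neg_of_not_isPos {a : V} (ha : a ∈ D.C) {β : V} (hβ : β ∈ D.R)
    (h : ¬ D.IsPos ω β) : ⟪a, β⟫_ℝ < 0 := by
  have := D.inner_pos_of_isPos ω hω ha (D.isPos_neg ω hω hβ h)
  rw [inner_neg_right] at this
  linarith

lemma isPos_alpha (i : Fin n) : D.IsPos ω (D.α i) := by
  refine ⟨D.simple_mem i, fun j => ?_⟩
  rw [real_inner_comm, hω]
  split <;> norm_num

lemma not_isPos_neg_alpha (i : Fin n) : ¬ D.IsPos ω (-(D.α i)) := by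
  rintro ⟨-, h⟩
  have := h i
  rw [inner_neg_left, real_inner_comm, hω, if_pos rfl] at this
  linarith

omit hω in
lemma sref_alpha_self (i : Fin n) : D.sref i (D.α i) = -(D.α i) := by
  rw [D.sref_apply]
  have hne : ⟪D.α i, D.α i⟫_ℝ ≠ 0 := ne_of_gt (D.inner_alpha_pos i)
  rw [mul_div_assoc, div_self hne, mul_one]
  module

/-- Key lemma: a simple reflection permutes the positive roots other than its own root. -/
lemma sref_isPos {i : Fin n} {β : V} (hpos : D.IsPos ω β) (hne : β ≠ D.α i) :
    D.IsPos ω (D.sref i β) := by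
  obtain ⟨hβR, hc⟩ := hpos
  have hγR : D.sref i β ∈ D.R := D.sref_root hβR
  have hex : ∃ j₀, j₀ ≠ i ∧ 0 < ⟪β, ω j₀⟫_ℝ := by
    by_contra hno
    push_neg at hno
    have hz : ∀ j, j ≠ i → ⟪β, ω j⟫_ℝ = 0 := fun j hj => le_antisymm (hno j hj) (hc j)
    have hrep : β = ⟪β, ω i⟫_ℝ • D.α i := by
      conv_lhs => rw [D.dual_expansion ω hω β]
      rw [Finset.sum_eq_single i]
      · intro j _ hj
        rw [hz j hj, zero_smul]
      · intro h; exact absurd (Finset.mem_univ i) h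
    rcases D.reduced (D.α i) (D.simple_mem i) (⟪β, ω i⟫_ℝ) (by rw [← hrep]; exact hβR) with h1 | h1
    · exact hne (by rw [hrep, h1, one_smul])
    · linarith [hc i]
  obtain ⟨j₀, hj₀, hpos0⟩ := hex
  have hcoord : ⟪D.sref i β, ω j₀⟫_ℝ = ⟪β, ω j₀⟫_ℝ := by
    rw [D.sref_apply, inner_sub_left, real_inner_smul_left]
    have h0 : ⟪D.α i, ω j₀⟫_ℝ = 0 := by
      rw [real_inner_comm, hω j₀ i, if_neg hj₀]
    rw [h0]
    ring
  rcases D.dichotomy ω hω hγR with h | h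
  · exact h
  · exfalso
    have := h j₀
    rw [hcoord] at this
    linarith

end Omega

end RootSystemData
namespace RootSystemData

variable {V : Type} [NormedAddCommGroup V] [InnerProductSpace ℝ V] {n : ℕ}
variable (D : RootSystemData V n)

lemma word_inv (l : List (Fin n)) :
    ((l.map D.sref).prod)⁻¹ = (l.reverse.map D.sref).prod := by
  rw [List.prod_inv_reverse, List.map_reverse]
  congr 1
  simp [D.sref_inv]

lemma conj_sref {g : V ≃ₗ[ℝ] V} (hg : g ∈ D.WK Set.univ) {i j : Fin n}
    (hij : g (D.α i) = D.α j) : g * D.sref i * g⁻¹ = D.sref j := by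
  ext v
  show g (D.sref i (g⁻¹ v)) = D.sref j v
  have h3 : g (g⁻¹ v) = v := g.apply_symm_apply v
  have h1 : ⟪g⁻¹ v, D.α i⟫_ℝ = ⟪v, D.α j⟫_ℝ := by
    rw [← hij, ← D.inner_WK hg (g⁻¹ v) (D.α i), h3]
  have h2 : ⟪D.α i, D.α i⟫_ℝ = ⟪D.α j, D.α j⟫_ℝ := by
    rw [← hij, D.inner_WK hg]
  rw [D.sref_apply, D.sref_apply, map_sub, map_smul, hij, h3, h1, h2]

section Omega

variable (ω : Fin n → V) (hω : ∀ i j, ⟪ω i, D.α j⟫_ℝ = if i = j then 1 else 0)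

include hω

lemma not_isPos_both {γ : V} (h1 : D.IsPos ω γ) (h2 : D.IsPos ω (-γ)) : False := by
  apply D.root_ne_zero γ h1.1
  have hz : ∀ j, ⟪γ, ω j⟫_ℝ = 0 := by
    intro j
    have := h2.2 j
    rw [inner_neg_left] at this
    linarith [h1.2 j]
  rw [D.dual_expansion ω hω γ]
  apply Finset.sum_eq_zero
  intro j _
  rw [hz j, zero_smul]

lemma flip (l : List (Fin n)) {β : V} (hR : β ∈ D.R) (hnp : ¬ D.IsPos ω β)
    (hp : D.IsPos ω ((l.map D.sref).prod β)) :
    ∃ l₁ j l₂, l = l₁ ++ j :: l₂ ∧ ((l₂.map D.sref).prod) β = -(D.α j) := by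
  induction l with
  | nil =>
    simp only [List.map_nil, List.prod_nil] at hp
    exact absurd hp hnp
  | cons j l ih =>
    by_cases hx : D.IsPos ω ((l.map D.sref).prod β)
    · obtain ⟨l₁, j', l₂, hdec, hflip⟩ := ih hx
      exact ⟨j :: l₁, j', l₂, by rw [hdec]; rfl, hflip⟩
    · set x := (l.map D.sref).prod β with hxdef
      have hxR : x ∈ D.R := D.WK_maps_R (D.word_mem_WK (K := Set.univ) (by simp)) β hR
      have hp' : D.IsPos ω (D.sref j x) := by
        have : ((j :: l).map D.sref).prod β = D.sref j x := by
          simp only [List.map_cons, List.prod_cons]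
          rfl
        rwa [this] at hp
      have hxval : x = -(D.α j) := by
        by_contra hne
        have hnegpos : D.IsPos ω (-x) := D.isPos_neg ω hω hxR hx
        have hne' : -x ≠ D.α j := fun h => hne (by rw [← h]; simp)
        have := D.sref_isPos ω hω hnegpos hne'
        rw [map_neg] at this
        exact D.not_isPos_both ω hω hp' this
      exact ⟨[], j, l, rfl, hxval⟩

lemma deletion (l₀ : List (Fin n)) (i : Fin n)
    (h : D.IsPos ω (((l₀ ++ [i]).map D.sref).prod (D.α i))) :
    ∃ l' : List (Fin n), l'.length + 2 = (l₀ ++ [i]).length ∧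
      (l'.map D.sref).prod = ((l₀ ++ [i]).map D.sref).prod := by
  have happ : ((l₀ ++ [i]).map D.sref).prod (D.α i)
      = (l₀.map D.sref).prod (-(D.α i)) := by
    rw [List.map_append, List.prod_append]
    show (l₀.map D.sref).prod ((D.sref i) (D.α i)) = _
    rw [D.sref_alpha_self]
  rw [happ] at h
  obtain ⟨l₁, j, l₂, hdec, hflip⟩ :=
    D.flip ω hω l₀ (D.neg_mem (D.simple_mem i)) (D.not_isPos_neg_alpha ω hω i) h
  have hv : (l₂.map D.sref).prod (D.α i) = D.α j := by
    rw [map_neg] at hflip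
    exact neg_injective hflip
  have hconj := D.conj_sref (D.word_mem_WK (K := Set.univ) (l := l₂) (by simp)) hv
  have hkey : D.sref j * (l₂.map D.sref).prod = (l₂.map D.sref).prod * D.sref i := by
    have := hconj
    rw [eq_comm, ← mul_inv_eq_iff_eq_mul] at this
    rw [← this]
    group
  refine ⟨l₁ ++ l₂, ?_, ?_⟩
  · rw [hdec]
    simp only [List.length_append, List.length_cons, List.length_nil]
    omega
  · rw [hdec]
    simp only [List.map_append, List.prod_append, List.map_cons, List.prod_cons,
      List.map_nil, List.prod_nil, mul_one]
    have hred : D.sref j * (l₂.map D.sref).prod * D.sref i = (l₂.map D.sref).prod := by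
      rw [hkey, mul_assoc, D.sref_mul_self, mul_one]
    conv_lhs => rw [← hred]
    group

variable {a : V} (ha : a ∈ D.C)

include ha

lemma word_fixed : ∀ (m : ℕ) (l : List (Fin n)), l.length = m →
    (l.map D.sref).prod a ∈ D.closedC → (l.map D.sref).prod a = a := by
  intro m
  induction m using Nat.strong_induction_on with
  | _ m ih =>
    intro l hlen hcc
    cases l with
    | nil => simp
    | cons i l' =>
    set w := ((i :: l').map D.sref).prod with hwdef
    have hw : w ∈ D.WK Set.univ := D.word_mem_WK (by simp)
    have hwinv : w⁻¹ ∈ D.WK Set.univ := Subgroup.inv_mem _ hw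
    have step1 : ∀ i, D.IsPos ω (w⁻¹ (D.α i)) := by
      intro i
      have hR : w⁻¹ (D.α i) ∈ D.R := D.WK_maps_R hwinv _ (D.simple_mem i)
      by_contra hnp
      have hneg := D.inner_neg_of_not_isPos ω hω ha hR hnp
      have heq : ⟪w a, D.α i⟫_ℝ = ⟪a, w⁻¹ (D.α i)⟫_ℝ := D.inner_WK' hw a (D.α i)
      have := hcc i
      rw [heq] at this
      linarith
    have hrev : w⁻¹ = ((l'.reverse ++ [i]).map D.sref).prod := by
      rw [hwdef, D.word_inv, List.reverse_cons]
    have hposi : D.IsPos ω (((l'.reverse ++ [i]).map D.sref).prod (D.α i)) := by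
      rw [← hrev]
      exact step1 i
    obtain ⟨l'', hl''len, hl''prod⟩ := D.deletion ω hω l'.reverse i hposi
    have hwEq : w = ((l''.reverse).map D.sref).prod := by
      have hthis : w⁻¹ = (l''.map D.sref).prod := by rw [hrev, hl''prod]
      rw [← D.word_inv l'', ← hthis, inv_inv]
    have hlen'' : l''.reverse.length < m := by
      rw [List.length_reverse]
      have : l'.reverse.length + 1 = m := by
        rw [List.length_reverse]
        simpa using hlen
      simp only [List.length_append, List.length_singleton] at hl''len
      omega
    have := ih _ hlen'' l''.reverse rfl (by rw [← hwEq]; exact hcc)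
    rw [hwEq]
    exact this

lemma mem_closedC_orbit_eq {b : V} (hb : b ∈ D.orbit Set.univ a) (hbc : b ∈ D.closedC) :
    b = a := by
  obtain ⟨g, hg, rfl⟩ := hb
  obtain ⟨l, -, rfl⟩ := D.exists_word hg
  exact D.word_fixed ω hω ha l.length l rfl hbc

end Omega

end RootSystemData
namespace RootSystemData

variable {V : Type} [NormedAddCommGroup V] [InnerProductSpace ℝ V] {n : ℕ}
variable (D : RootSystemData V n)

lemma span_R_top : Submodule.span ℝ D.R = ⊤ := by
  apply top_unique
  rw [← D.spanning]
  apply Submodule.span_mono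
  rintro x ⟨i, rfl⟩
  exact D.simple_mem i

lemma W_finite : Finite ↥(D.WK Set.univ : Set (V ≃ₗ[ℝ] V)) := by
  have hRfin : Finite ↥D.R := D.finite
  let Φ : ↥(D.WK Set.univ : Set (V ≃ₗ[ℝ] V)) → (↥D.R → ↥D.R) := fun g β =>
    ⟨(g : V ≃ₗ[ℝ] V) β, D.WK_maps_R g.2 β β.2⟩
  have hinj : Function.Injective Φ := by
    intro g g' h
    ext1
    apply LinearEquiv.toLinearMap_injective
    apply LinearMap.ext_on D.span_R_top
    intro x hx
    have := congrFun h ⟨x, hx⟩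
    simpa [Φ, Subtype.ext_iff] using this
  exact Finite.of_injective Φ hinj

lemma orbit_mono {K K' : Set (Fin n)} (h : K ⊆ K') (a : V) :
    D.orbit K a ⊆ D.orbit K' a := by
  rintro x ⟨g, hg, rfl⟩
  exact ⟨g, D.WK_mono h hg, rfl⟩

lemma self_mem_orbit (K : Set (Fin n)) (a : V) : a ∈ D.orbit K a :=
  ⟨1, Subgroup.one_mem _, rfl⟩

lemma orbit_finite (a : V) : (D.orbit Set.univ a).Finite := by
  have := D.W_finite
  have : (D.orbit Set.univ a) ⊆ Set.range
      (fun g : ↥(D.WK Set.univ : Set (V ≃ₗ[ℝ] V)) => (g : V ≃ₗ[ℝ] V) a) := by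
    rintro x ⟨g, hg, rfl⟩
    exact ⟨⟨g, hg⟩, rfl⟩
  exact Set.Finite.subset (Set.finite_range _) this

lemma sref_mem_orbit {K : Set (Fin n)} {j : Fin n} (hj : j ∈ K) {a x : V}
    (hx : x ∈ D.orbit K a) : D.sref j x ∈ D.orbit K a := by
  obtain ⟨g, hg, rfl⟩ := hx
  exact ⟨D.sref j * g, Subgroup.mul_mem _ (D.sref_mem_WK hj) hg, rfl⟩

lemma sref_mem_orbit_iff {K : Set (Fin n)} {j : Fin n} (hj : j ∈ K) {a x : V} :
    D.sref j x ∈ D.orbit K a ↔ x ∈ D.orbit K a := by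
  constructor
  · intro h
    have := D.sref_mem_orbit hj h
    rwa [D.sref_sref] at this
  · exact D.sref_mem_orbit hj

section Omega

variable (ω : Fin n → V) (hω : ∀ i j, ⟪ω i, D.α j⟫_ℝ = if i = j then 1 else 0)

include hω

lemma inner_omega_sref (i j : Fin n) (x : V) :
    ⟪D.sref j x, ω i⟫_ℝ = ⟪x, ω i⟫_ℝ - (2 * ⟪x, D.α j⟫_ℝ / ⟪D.α j, D.α j⟫_ℝ) *
      (if i = j then 1 else 0) := by
  rw [D.sref_apply, inner_sub_left, real_inner_smul_left]
  have h0 : ⟪D.α j, ω i⟫_ℝ = if i = j then 1 else 0 := by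
    rw [real_inner_comm]; exact hω i j
  rw [h0]

variable {a : V} (ha : a ∈ D.C)

include ha

/-- `a` maximizes each `⟪·, ω i⟫` over the orbit. -/
lemma orbit_le_omega (i : Fin n) {x : V} (hx : x ∈ D.orbit Set.univ a) :
    ⟪x, ω i⟫_ℝ ≤ ⟪a, ω i⟫_ℝ := by
  classical
  set S := D.orbit Set.univ a with hS
  have hSfin : S.Finite := D.orbit_finite a
  have hSne : S.Nonempty := ⟨a, D.self_mem_orbit _ a⟩
  -- first maximize ⟪·, ω i⟫
  obtain ⟨x₀, hx₀S, hx₀max⟩ : ∃ x₀ ∈ S, ∀ y ∈ S, ⟪x₀, ω i⟫_ℝ ≤ ⟪y, ω i⟫_ℝ → ⟪x₀, ω i⟫_ℝ = ⟪y, ω i⟫_ℝ := by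
    obtain ⟨x, hm⟩ := Set.Finite.exists_maximalFor (fun y => ⟪y, ω i⟫_ℝ) S hSfin hSne
    exact ⟨x, hm.1, fun y hy h => le_antisymm h (hm.2 hy h)⟩
  have hx₀max' : ∀ y ∈ S, ⟪y, ω i⟫_ℝ ≤ ⟪x₀, ω i⟫_ℝ := by
    intro y hy
    rcases le_total (⟪y, ω i⟫_ℝ) (⟪x₀, ω i⟫_ℝ) with h | h
    · exact h
    · rw [hx₀max y hy h]
  -- the set of maximizers
  set T := {y ∈ S | ⟪y, ω i⟫_ℝ = ⟪x₀, ω i⟫_ℝ} with hT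
  have hTfin : T.Finite := hSfin.subset (fun y hy => hy.1)
  have hTne : T.Nonempty := ⟨x₀, hx₀S, rfl⟩
  obtain ⟨x₁, hx₁T, hx₁max⟩ : ∃ x₁ ∈ T, ∀ y ∈ T, ⟪x₁, a⟫_ℝ ≤ ⟪y, a⟫_ℝ → ⟪x₁, a⟫_ℝ = ⟪y, a⟫_ℝ := by
    obtain ⟨x, hm⟩ := Set.Finite.exists_maximalFor (fun y => ⟪y, a⟫_ℝ) T hTfin hTne
    exact ⟨x, hm.1, fun y hy h => le_antisymm h (hm.2 hy h)⟩
  have hx₁max' : ∀ y ∈ T, ⟪y, a⟫_ℝ ≤ ⟪x₁, a⟫_ℝ := by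
    intro y hy
    rcases le_total (⟪y, a⟫_ℝ) (⟪x₁, a⟫_ℝ) with h | h
    · exact h
    · rw [hx₁max y hy h]
  have hx₁S : x₁ ∈ S := hx₁T.1
  have hx₁cc : x₁ ∈ D.closedC := by
    intro j
    have hx'S : D.sref j x₁ ∈ S := D.sref_mem_orbit (Set.mem_univ j) hx₁S
    have hval := D.inner_omega_sref ω hω i j x₁
    by_cases hij : i = j
    · subst hij
      rw [if_pos rfl, mul_one] at hval
      have hle := hx₀max' _ hx'S
      rw [hval, hx₁T.2] at hle
      by_contra hneg
      push_neg at hneg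
      have hk : 2 * ⟪x₁, D.α i⟫_ℝ / ⟪D.α i, D.α i⟫_ℝ < 0 :=
        div_neg_of_neg_of_pos (by linarith) (D.inner_alpha_pos i)
      linarith
    · rw [if_neg hij, mul_zero, sub_zero] at hval
      have hx'T : D.sref j x₁ ∈ T := ⟨hx'S, by rw [hval, hx₁T.2]⟩
      have hle := hx₁max' _ hx'T
      rw [D.sref_apply, inner_sub_left, real_inner_smul_left] at hle
      have haj : 0 < ⟪D.α j, a⟫_ℝ := by rw [real_inner_comm]; exact ha j
      have hA := D.inner_alpha_pos j
      by_contra hneg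
      push_neg at hneg
      have hk : 2 * ⟪x₁, D.α j⟫_ℝ / ⟪D.α j, D.α j⟫_ℝ < 0 := by
        apply div_neg_of_neg_of_pos _ hA
        linarith
      nlinarith
  have hx₁a : x₁ = a := D.mem_closedC_orbit_eq ω hω ha hx₁S hx₁cc
  calc ⟪x, ω i⟫_ℝ ≤ ⟪x₀, ω i⟫_ℝ := hx₀max' x hx
    _ = ⟪x₁, ω i⟫_ℝ := hx₁T.2.symm
    _ = ⟪a, ω i⟫_ℝ := by rw [hx₁a]

/-- characterization of the orbit points on the supporting hyperplane -/
lemma argmax_mem_suborbit (i : Fin n) : ∀ (m : ℕ) (x : V), x ∈ D.orbit Set.univ a →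
    ⟪x, ω i⟫_ℝ = ⟪a, ω i⟫_ℝ →
    {y ∈ D.orbit Set.univ a | ⟪x, a⟫_ℝ < ⟪y, a⟫_ℝ}.ncard = m →
    x ∈ D.orbit {i}ᶜ a := by
  intro m
  induction m using Nat.strong_induction_on with
  | _ m ih =>
    intro x hxS hxmax hm
    set S := D.orbit Set.univ a with hS
    have hSfin : S.Finite := D.orbit_finite a
    by_cases hcc : x ∈ D.closedC
    · rw [D.mem_closedC_orbit_eq ω hω ha hxS hcc]
      exact D.self_mem_orbit _ a
    · simp only [closedC, Set.mem_setOf_eq, not_forall] at hcc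
      obtain ⟨j, hj⟩ := hcc
      push_neg at hj
      have hA := D.inner_alpha_pos j
      -- j ≠ i since x maximizes ⟪·, ω i⟫
      have hji : j ≠ i := by
        rintro rfl
        have hx'S : D.sref j x ∈ S := D.sref_mem_orbit (Set.mem_univ j) hxS
        have hle := D.orbit_le_omega ω hω ha j hx'S
        have hval := D.inner_omega_sref ω hω j j x
        rw [if_pos rfl, mul_one] at hval
        rw [hval, hxmax] at hle
        have : 2 * ⟪x, D.α j⟫_ℝ / ⟪D.α j, D.α j⟫_ℝ < 0 :=
          div_neg_of_neg_of_pos (by linarith) hA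
        linarith
      set x' := D.sref j x with hx'
      have hx'S : x' ∈ S := D.sref_mem_orbit (Set.mem_univ j) hxS
      have hx'max : ⟪x', ω i⟫_ℝ = ⟪a, ω i⟫_ℝ := by
        have hval := D.inner_omega_sref ω hω i j x
        rw [if_neg (Ne.symm hji), mul_zero, sub_zero] at hval
        rw [hx', hval, hxmax]
      have hgain : ⟪x, a⟫_ℝ < ⟪x', a⟫_ℝ := by
        rw [hx', D.sref_apply, inner_sub_left, real_inner_smul_left]
        have haj : 0 < ⟪D.α j, a⟫_ℝ := by rw [real_inner_comm]; exact ha j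
        have hk : 2 * ⟪x, D.α j⟫_ℝ / ⟪D.α j, D.α j⟫_ℝ < 0 :=
          div_neg_of_neg_of_pos (by linarith) hA
        nlinarith
      -- the measure decreases
      have hsub : {y ∈ S | ⟪x', a⟫_ℝ < ⟪y, a⟫_ℝ} ⊂ {y ∈ S | ⟪x, a⟫_ℝ < ⟪y, a⟫_ℝ} := by
        constructor
        · rintro y ⟨hyS, hy⟩
          exact ⟨hyS, lt_trans hgain hy⟩
        · intro hcon
          have := hcon ⟨hx'S, hgain⟩
          exact lt_irrefl _ this.2
      have hlt : {y ∈ S | ⟪x', a⟫_ℝ < ⟪y, a⟫_ℝ}.ncard < m := by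
        rw [← hm]
        exact Set.ncard_lt_ncard hsub (hSfin.subset (fun y hy => hy.1))
      have hx'sub := ih _ hlt x' hx'S hx'max rfl
      have : D.sref j x' ∈ D.orbit {i}ᶜ a :=
        D.sref_mem_orbit (by simp [hji]) hx'sub
      rwa [hx', D.sref_sref] at this
  
-- The sub-orbit lies in the hyperplane
omit ha in
lemma suborbit_inner_eq (i : Fin n) {g : V ≃ₗ[ℝ] V} (hg : g ∈ D.WK ({i}ᶜ : Set (Fin n))) :
    ∀ v, ⟪g v, ω i⟫_ℝ = ⟪v, ω i⟫_ℝ := by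
  rw [D.WK_eq_closure] at hg
  induction hg using Subgroup.closure_induction with
  | mem g hg =>
    obtain ⟨j, hj, rfl⟩ := hg
    intro v
    have hji : ¬ (i = j) := by
      simp only [Set.mem_compl_iff, Set.mem_singleton_iff] at hj
      exact fun h => hj h.symm
    rw [D.inner_omega_sref ω hω i j v, if_neg hji, mul_zero, sub_zero]
  | one => intro v; rfl
  | mul g h _ _ hg hh =>
    intro v
    rw [show (g * h) v = g (h v) from rfl, hg, hh]
  | inv g _ hg =>
    intro v
    have := hg (g⁻¹ v)
    have h3 : g (g⁻¹ v) = v := g.apply_symm_apply v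
    rw [h3] at this
    exact this.symm

end Omega

end RootSystemData
namespace RootSystemData

variable {V : Type} [NormedAddCommGroup V] [InnerProductSpace ℝ V] {n : ℕ}
variable (D : RootSystemData V n)

section Omega

variable (ω : Fin n → V) (hω : ∀ i j, ⟪ω i, D.α j⟫_ℝ = if i = j then 1 else 0)

omit D in
lemma inner_linear (u : V) : IsLinearMap ℝ (fun x : V => ⟪x, u⟫_ℝ) :=
  ⟨fun x y => inner_add_left x y u, fun c x => real_inner_smul_left x u c⟩

variable {a : V}

include hω

/-- coordinate of `sref j a - a` -/
lemma sref_a_coord (j k : Fin n) :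
    ⟪D.sref j a - a, ω k⟫_ℝ = -(2 * ⟪a, D.α j⟫_ℝ / ⟪D.α j, D.α j⟫_ℝ) *
      (if k = j then 1 else 0) := by
  rw [inner_sub_left, D.inner_omega_sref ω hω k j a]
  ring

omit hω

lemma cpos (ha : a ∈ D.C) (j : Fin n) : 0 < 2 * ⟪a, D.α j⟫_ℝ / ⟪D.α j, D.α j⟫_ℝ :=
  div_pos (by linarith [ha j]) (D.inner_alpha_pos j)

include hω

/-- G1 : the polytope lies in the halfspace -/
lemma P_subset_halfspace (ha : a ∈ D.C) (i : Fin n) :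
    D.P a ⊆ {x | ⟪x - a, ω i⟫_ℝ ≤ 0} := by
  have hconv : Convex ℝ {x : V | ⟪x - a, ω i⟫_ℝ ≤ 0} := by
    have : {x : V | ⟪x - a, ω i⟫_ℝ ≤ 0} = {x : V | ⟪x, ω i⟫_ℝ ≤ ⟪a, ω i⟫_ℝ} := by
      ext x
      simp only [Set.mem_setOf_eq, inner_sub_left, sub_nonpos]
    rw [this]
    exact convex_halfSpace_le (inner_linear (ω i)) _
  apply convexHull_min _ hconv
  intro x hx
  simp only [Set.mem_setOf_eq, inner_sub_left, sub_nonpos]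
  exact D.orbit_le_omega ω hω ha i hx

/-- G2 : the `i`-th facet lies in the hyperplane -/
lemma F_subset_hyperplane (i : Fin n) :
    D.F a i ⊆ {x | ⟪x - a, ω i⟫_ℝ = 0} := by
  have hconv : Convex ℝ {x : V | ⟪x - a, ω i⟫_ℝ = 0} := by
    have : {x : V | ⟪x - a, ω i⟫_ℝ = 0} = {x : V | ⟪x, ω i⟫_ℝ = ⟪a, ω i⟫_ℝ} := by
      ext x
      simp only [Set.mem_setOf_eq, inner_sub_left, sub_eq_zero]
    rw [this]
    exact convex_hyperplane (inner_linear (ω i)) _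
  apply convexHull_min _ hconv
  rintro x ⟨g, hg, rfl⟩
  simp only [Set.mem_setOf_eq, inner_sub_left, sub_eq_zero]
  exact D.suborbit_inner_eq ω hω i hg a

omit hω

/-- G3 -/
lemma F_subset_P (i : Fin n) : D.F a i ⊆ D.P a :=
  convexHull_mono (D.orbit_mono (Set.subset_univ _) a)

lemma a_mem_F (i : Fin n) : a ∈ D.F a i :=
  subset_convexHull ℝ _ (D.self_mem_orbit _ a)

lemma a_mem_P : a ∈ D.P a :=
  subset_convexHull ℝ _ (D.self_mem_orbit _ a)

include hω

/-- G4 : points of `P` on the hyperplane lie in `F i` -/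
lemma P_inter_hyperplane_subset_F (ha : a ∈ D.C) (i : Fin n) {x : V}
    (hxP : x ∈ D.P a) (hx0 : ⟪x - a, ω i⟫_ℝ = 0) : x ∈ D.F a i := by
  classical
  rw [P, convexHull_eq] at hxP
  obtain ⟨ι, t, w, z, hw0, hw1, hz, hcm⟩ := hxP
  rw [Finset.centerMass_eq_of_sum_1 t z hw1] at hcm
  have hle : ∀ k ∈ t, ⟪z k, ω i⟫_ℝ ≤ ⟪a, ω i⟫_ℝ := fun k hk =>
    D.orbit_le_omega ω hω ha i (hz k hk)
  have hxi : ⟪x, ω i⟫_ℝ = ∑ k ∈ t, w k * ⟪z k, ω i⟫_ℝ := by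
    rw [← hcm, sum_inner]
    exact Finset.sum_congr rfl fun k _ => real_inner_smul_left _ _ _
  have h1 : ⟪x, ω i⟫_ℝ = ⟪a, ω i⟫_ℝ := by
    have := hx0
    rw [inner_sub_left, sub_eq_zero] at this
    exact this
  have hsum : ∑ k ∈ t, w k * (⟪a, ω i⟫_ℝ - ⟪z k, ω i⟫_ℝ) = 0 := by
    have hdist : ∑ k ∈ t, w k * (⟪a, ω i⟫_ℝ - ⟪z k, ω i⟫_ℝ)
        = (∑ k ∈ t, w k) * ⟪a, ω i⟫_ℝ - ∑ k ∈ t, w k * ⟪z k, ω i⟫_ℝ := by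
      rw [Finset.sum_mul, ← Finset.sum_sub_distrib]
      exact Finset.sum_congr rfl fun k _ => by ring
    rw [hdist, hw1, one_mul, ← hxi, h1, sub_self]
  have hterm : ∀ k ∈ t, 0 ≤ w k * (⟪a, ω i⟫_ℝ - ⟪z k, ω i⟫_ℝ) := fun k hk =>
    mul_nonneg (hw0 k hk) (by linarith [hle k hk])
  have hzero := (Finset.sum_eq_zero_iff_of_nonneg hterm).1 hsum
  -- points with nonzero weight are in the sub-orbit
  have horb : ∀ k ∈ t, w k ≠ 0 → z k ∈ D.orbit ({i}ᶜ : Set (Fin n)) a := by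
    intro k hk hwk
    have h0 := hzero k hk
    have : ⟪a, ω i⟫_ℝ - ⟪z k, ω i⟫_ℝ = 0 := by
      rcases mul_eq_zero.1 h0 with h | h
      · exact absurd h hwk
      · exact h
    exact D.argmax_mem_suborbit ω hω ha i _ (z k) (hz k hk) (by linarith) rfl
  set t' := t.filter (fun k => w k ≠ 0) with ht'
  have hsubt : t' ⊆ t := Finset.filter_subset _ _
  have hw1' : ∑ k ∈ t', w k = 1 := by
    rw [ht', Finset.sum_filter_ne_zero]
    exact hw1
  have hx' : x = ∑ k ∈ t', w k • z k := by
    rw [← hcm, ht']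
    rw [Finset.sum_filter_of_ne]
    intro k hk h
    intro hwk
    apply h
    rw [hwk, zero_smul]
  rw [hx']
  exact Convex.sum_mem (convex_convexHull ℝ _)
    (fun k hk => hw0 k (hsubt hk))
    hw1'
    (fun k hk => subset_convexHull ℝ _
      (horb k (hsubt hk) (Finset.mem_filter.1 hk).2))

/-- G5 : `F a i` is an extreme subset of `P a` -/
lemma isExtreme_F (ha : a ∈ D.C) (i : Fin n) : IsExtreme ℝ (D.P a) (D.F a i) := by
  constructor
  · exact D.F_subset_P (a := a) i
  · rintro x1 hx1 x2 hx2 x hxF ⟨c1, c2, hc1, hc2, hc12, hcx⟩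
    have hf : ⟪x - a, ω i⟫_ℝ = 0 := D.F_subset_hyperplane ω hω i hxF
    have hf1 : ⟪x1 - a, ω i⟫_ℝ ≤ 0 := D.P_subset_halfspace ω hω ha i hx1
    have hf2 : ⟪x2 - a, ω i⟫_ℝ ≤ 0 := D.P_subset_halfspace ω hω ha i hx2
    have hcomb : ⟪x - a, ω i⟫_ℝ = c1 * ⟪x1 - a, ω i⟫_ℝ + c2 * ⟪x2 - a, ω i⟫_ℝ := by
      rw [← hcx]
      simp only [inner_sub_left, real_inner_smul_left, inner_add_left]
      linear_combination ⟪a, ω i⟫_ℝ * hc12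
    have h1 : ⟪x1 - a, ω i⟫_ℝ = 0 := by nlinarith
    have h2 : ⟪x2 - a, ω i⟫_ℝ = 0 := by nlinarith
    exact D.P_inter_hyperplane_subset_F ω hω ha i hx1 h1

lemma isFaceOf_F (ha : a ∈ D.C) (i : Fin n) : IsFaceOf (D.P a) (D.F a i) :=
  ⟨convex_convexHull ℝ _, D.isExtreme_F ω hω ha i, ⟨a, D.a_mem_F i⟩⟩

-- `sref j a` belongs to `F a i` whenever `j ≠ i`
omit hω in
lemma sref_a_mem_F {i j : Fin n} (hij : j ≠ i) : D.sref j a ∈ D.F a i := by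
  apply subset_convexHull
  exact D.sref_mem_orbit (by simp [hij]) (D.self_mem_orbit _ a)

/-- G8 : `F a i ≠ P a` -/
lemma F_ne_P (ha : a ∈ D.C) (i : Fin n) : D.F a i ≠ D.P a := by
  intro h
  have hmem : D.sref i a ∈ D.P a := by
    apply subset_convexHull
    exact D.sref_mem_orbit (Set.mem_univ i) (D.self_mem_orbit _ a)
  rw [← h] at hmem
  have h2 := D.F_subset_hyperplane ω hω i hmem
  simp only [Set.mem_setOf_eq] at h2
  rw [D.sref_a_coord ω hω i i, if_pos rfl, mul_one] at h2
  linarith [D.cpos ha i]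

end Omega

end RootSystemData
namespace RootSystemData

variable {V : Type} [NormedAddCommGroup V] [InnerProductSpace ℝ V] {n : ℕ}
variable (D : RootSystemData V n)

-- extreme subsets containing an interior point are everything
omit D in
lemma subset_of_extreme_interior {A G : Set V} (hex : IsExtreme ℝ A G) {q : V}
    (hqG : q ∈ G) (hqint : q ∈ interior A) : A ⊆ G := by
  intro p hp
  by_cases hpq : p = q
  · rwa [hpq]
  obtain ⟨ε, hε, hball⟩ := Metric.isOpen_iff.1 isOpen_interior q hqint
  have hqp : (0 : ℝ) < ‖q - p‖ := by
    rw [norm_pos_iff, sub_ne_zero]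
    exact fun h => hpq h.symm
  set δ : ℝ := ε / (2 * ‖q - p‖) with hδ
  have hδpos : 0 < δ := div_pos hε (by positivity)
  set r : V := q + δ • (q - p) with hr
  have hrA : r ∈ A := by
    apply interior_subset
    apply hball
    rw [Metric.mem_ball, dist_eq_norm, hr]
    have : q + δ • (q - p) - q = δ • (q - p) := by abel
    rw [this, norm_smul, Real.norm_eq_abs, abs_of_pos hδpos, hδ]
    rw [div_mul_eq_mul_div]
    rw [div_lt_iff₀ (by positivity)]
    nlinarith
  have hseg : q ∈ openSegment ℝ p r := by
    refine ⟨δ / (1 + δ), 1 / (1 + δ), by positivity, by positivity, ?_, ?_⟩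
    · field_simp
      ring
    · rw [hr]
      match_scalars <;> (field_simp; try ring)
  exact hex.2 hp hrA hqG hseg

section Omega

variable (ω : Fin n → V) (hω : ∀ i j, ⟪ω i, D.α j⟫_ℝ = if i = j then 1 else 0)
variable {a : V}

include hω

/-- INT : strictly sub-maximal points near `a` are interior -/
lemma mem_interior_P (ha : a ∈ D.C) {x : V}
    (h1 : ∀ j, ⟪x - a, ω j⟫_ℝ < 0)
    (h2 : ∑ j, (-(⟪x - a, ω j⟫_ℝ) * (⟪D.α j, D.α j⟫_ℝ / (2 * ⟪a, D.α j⟫_ℝ))) < 1) :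
    x ∈ interior (D.P a) := by
  classical
  set U := {y : V | (∀ j, ⟪y - a, ω j⟫_ℝ < 0) ∧
    ∑ j, (-(⟪y - a, ω j⟫_ℝ) * (⟪D.α j, D.α j⟫_ℝ / (2 * ⟪a, D.α j⟫_ℝ))) < 1} with hU
  have hcont : ∀ j : Fin n, Continuous fun y : V => ⟪y - a, ω j⟫_ℝ := fun j =>
    (continuous_id.sub continuous_const).inner continuous_const
  have hopen : IsOpen U := by
    have hU' : U = (⋂ j, {y : V | ⟪y - a, ω j⟫_ℝ < 0}) ∩
        {y : V | ∑ j, (-(⟪y - a, ω j⟫_ℝ) * (⟪D.α j, D.α j⟫_ℝ / (2 * ⟪a, D.α j⟫_ℝ))) < 1} := by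
      ext y
      simp only [hU, Set.mem_setOf_eq, Set.mem_inter_iff, Set.mem_iInter]
    rw [hU']
    apply IsOpen.inter
    · exact isOpen_iInter_of_finite fun j =>
        isOpen_lt (hcont j) continuous_const
    · apply isOpen_lt _ continuous_const
      apply continuous_finset_sum
      intro j _
      exact ((hcont j).neg).mul continuous_const
  have hsub : U ⊆ D.P a := by
    intro y hy
    obtain ⟨hy1, hy2⟩ := hy
    set t : Fin n → ℝ := fun j =>
      -(⟪y - a, ω j⟫_ℝ) * (⟪D.α j, D.α j⟫_ℝ / (2 * ⟪a, D.α j⟫_ℝ)) with ht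
    have htpos : ∀ j, 0 < t j := fun j =>
      mul_pos (by linarith [hy1 j]) (div_pos (D.inner_alpha_pos j) (by linarith [ha j]))
    have hT1 : ∑ j, t j < 1 := hy2
    -- the combination identity
    have e1 : ∀ j, t j • D.sref j a = t j • a + (⟪y - a, ω j⟫_ℝ) • D.α j := by
      intro j
      rw [D.sref_apply, smul_sub, smul_smul]
      have : t j * (2 * ⟪a, D.α j⟫_ℝ / ⟪D.α j, D.α j⟫_ℝ) = -(⟪y - a, ω j⟫_ℝ) := by
        rw [ht]
        have hA : ⟪D.α j, D.α j⟫_ℝ ≠ 0 := ne_of_gt (D.inner_alpha_pos j)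
        have haj : ⟪a, D.α j⟫_ℝ ≠ 0 := ne_of_gt (ha j)
        field_simp
      rw [this, neg_smul, sub_neg_eq_add]
    have key : (1 - ∑ j, t j) • a + ∑ j, t j • D.sref j a = y := by
      rw [Finset.sum_congr rfl (fun j _ => e1 j), Finset.sum_add_distrib, ← Finset.sum_smul]
      have hdual : y - a = ∑ j, ⟪y - a, ω j⟫_ℝ • D.α j := D.dual_expansion ω hω (y - a)
      rw [← hdual, sub_smul, one_smul]
      abel
    -- as a convex combination over `Fin (n+1)`
    have hmem : (1 - ∑ j, t j) • a + ∑ j, t j • D.sref j a ∈ D.P a := by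
      have hcomb := Convex.sum_mem (t := (Finset.univ : Finset (Fin (n+1))))
        (w := Fin.cons (1 - ∑ j, t j) t)
        (z := Fin.cons a (fun j => D.sref j a))
        (convex_convexHull ℝ (D.orbit Set.univ a))
        ?_ ?_ ?_
      · rw [Fin.sum_univ_succ] at hcomb
        simpa [P] using hcomb
      · intro k _
        refine Fin.cases ?_ ?_ k
        · simp only [Fin.cons_zero]
          linarith
        · intro j
          simp only [Fin.cons_succ]
          exact le_of_lt (htpos j)
      · rw [Fin.sum_univ_succ]
        simp only [Fin.cons_zero, Fin.cons_succ]
        ring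
      · intro k _
        refine Fin.cases ?_ ?_ k
        · simp only [Fin.cons_zero]
          exact subset_convexHull ℝ _ (D.self_mem_orbit _ a)
        · intro j
          simp only [Fin.cons_succ]
          exact subset_convexHull ℝ _ (D.sref_mem_orbit (Set.mem_univ j) (D.self_mem_orbit _ a))
      
    rw [key] at hmem
    exact hmem
  exact interior_maximal hsub hopen ⟨h1, h2⟩

/-- MASTER : a convex subset of `P` containing `a` and points below each hyperplane
contains an interior point of `P`. -/
lemma exists_mem_interior (ha : a ∈ D.C) {G : Set V} (hGconv : Convex ℝ G)
    (hGP : G ⊆ D.P a) (haG : a ∈ G)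
    (hy : ∀ k, ∃ y ∈ G, ⟪y - a, ω k⟫_ℝ < 0) :
    ∃ q ∈ G, q ∈ interior (D.P a) := by
  classical
  choose y hyG hyneg using hy
  have hyle : ∀ k j, ⟪y k - a, ω j⟫_ℝ ≤ 0 := fun k j =>
    D.P_subset_halfspace ω hω ha j (hGP (hyG k))
  set E : Fin n → ℝ := fun j => ∑ k, ⟪y k - a, ω j⟫_ℝ with hE
  have hEneg : ∀ j, E j < 0 := by
    intro j
    have hpos : 0 < ∑ k, -(⟪y k - a, ω j⟫_ℝ) :=
      Finset.sum_pos' (fun k _ => by linarith [hyle k j]) ⟨j, Finset.mem_univ j, by linarith [hyneg j]⟩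
    have : ∑ k, -(⟪y k - a, ω j⟫_ℝ) = -(E j) := by
      rw [hE, ← Finset.sum_neg_distrib]
    linarith [this ▸ hpos]
  set Cst : ℝ := ∑ j, (-(E j) * (⟪D.α j, D.α j⟫_ℝ / (2 * ⟪a, D.α j⟫_ℝ))) with hCst
  have hCstnn : 0 ≤ Cst := Finset.sum_nonneg fun j _ =>
    mul_nonneg (by linarith [hEneg j]) (le_of_lt (div_pos (D.inner_alpha_pos j) (by linarith [ha j])))
  set μ : ℝ := min ((1:ℝ) / (n + 1)) (1 / (Cst + 1)) with hμ
  have hμpos : 0 < μ := lt_min (by positivity) (by positivity)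
  have hμn : (n : ℝ) * μ < 1 := by
    have h1 : μ ≤ 1 / (n + 1) := min_le_left _ _
    have : (n : ℝ) * μ ≤ (n : ℝ) * (1 / (n+1)) := by
      apply mul_le_mul_of_nonneg_left h1 (by positivity)
    have h2 : (n : ℝ) * (1 / (n+1)) < 1 := by
      rw [mul_one_div, div_lt_one (by positivity)]
      linarith
    linarith
  have hμC : μ * Cst < 1 := by
    have h1 : μ ≤ 1 / (Cst + 1) := min_le_right _ _
    have : μ * Cst ≤ (1 / (Cst + 1)) * Cst := by
      apply mul_le_mul_of_nonneg_right h1 hCstnn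
    have h2 : (1 / (Cst + 1)) * Cst < 1 := by
      rw [one_div, inv_mul_lt_iff₀ (by positivity)]
      linarith
    linarith
  set q : V := (1 - (n : ℝ) * μ) • a + ∑ k, μ • y k with hq
  have hqa : q - a = ∑ k, μ • (y k - a) := by
    rw [hq]
    rw [Finset.sum_congr rfl (fun k _ => smul_sub μ (y k) a), Finset.sum_sub_distrib]
    rw [Finset.sum_const, Finset.card_univ, Fintype.card_fin]
    rw [sub_smul, one_smul, ← Nat.cast_smul_eq_nsmul ℝ]
    rw [smul_smul]
    abel
  have hqcoord : ∀ j, ⟪q - a, ω j⟫_ℝ = μ * E j := by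
    intro j
    rw [hqa, sum_inner, hE, Finset.mul_sum]
    exact Finset.sum_congr rfl fun k _ => by
      rw [real_inner_smul_left]
  have hqG : q ∈ G := by
    rw [hq]
    have hcomb := Convex.sum_mem (t := (Finset.univ : Finset (Fin (n+1))))
      (w := Fin.cons (1 - (n : ℝ) * μ) (fun _ => μ))
      (z := Fin.cons a y) hGconv ?_ ?_ ?_
    · rw [Fin.sum_univ_succ] at hcomb
      simpa using hcomb
    · intro k _
      refine Fin.cases ?_ ?_ k
      · simp only [Fin.cons_zero]
        linarith
      · intro j
        simp only [Fin.cons_succ]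
        exact le_of_lt hμpos
    · rw [Fin.sum_univ_succ]
      simp only [Fin.cons_zero, Fin.cons_succ]
      rw [Finset.sum_const, Finset.card_univ, Fintype.card_fin, nsmul_eq_mul]
      ring
    · intro k _
      refine Fin.cases ?_ ?_ k
      · simp only [Fin.cons_zero]
        exact haG
      · intro j
        simp only [Fin.cons_succ]
        exact hyG j
  refine ⟨q, hqG, ?_⟩
  apply D.mem_interior_P ω hω ha
  · intro j
    rw [hqcoord j]
    exact mul_neg_of_pos_of_neg hμpos (hEneg j)
  · have : ∑ j, (-(⟪q - a, ω j⟫_ℝ) * (⟪D.α j, D.α j⟫_ℝ / (2 * ⟪a, D.α j⟫_ℝ)))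
        = μ * Cst := by
      rw [hCst, Finset.mul_sum]
      exact Finset.sum_congr rfl fun j _ => by
        rw [hqcoord j]
        ring
    rw [this]
    exact hμC

end Omega

end RootSystemData
namespace RootSystemData

variable {V : Type} [NormedAddCommGroup V] [InnerProductSpace ℝ V] {n : ℕ}
variable (D : RootSystemData V n)

section Omega

variable (ω : Fin n → V) (hω : ∀ i j, ⟪ω i, D.α j⟫_ℝ = if i = j then 1 else 0)
variable {a : V}

include hω

/-- each `F a i` is a facet of `P a` -/
lemma isFacetOf_F (ha : a ∈ D.C) (i : Fin n) : IsFacetOf (D.P a) (D.F a i) := by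
  refine ⟨D.isFaceOf_F ω hω ha i, D.F_ne_P ω hω ha i, ?_⟩
  intro G' hG' hFG'
  by_cases hsub : ∀ x ∈ G', ⟪x - a, ω i⟫_ℝ = 0
  · left
    apply Set.Subset.antisymm _ hFG'
    intro x hx
    exact D.P_inter_hyperplane_subset_F ω hω ha i (hG'.2.1.1 hx) (hsub x hx)
  · right
    push_neg at hsub
    obtain ⟨yy, hyyG, hyyne⟩ := hsub
    have hyylt : ⟪yy - a, ω i⟫_ℝ < 0 :=
      lt_of_le_of_ne (D.P_subset_halfspace ω hω ha i (hG'.2.1.1 hyyG)) hyyne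
    have hy : ∀ k, ∃ y ∈ G', ⟪y - a, ω k⟫_ℝ < 0 := by
      intro k
      by_cases hk : k = i
      · exact ⟨yy, hyyG, by rw [hk]; exact hyylt⟩
      · refine ⟨D.sref k a, hFG' (D.sref_a_mem_F (a := a) hk), ?_⟩
        rw [D.sref_a_coord ω hω k k, if_pos rfl, mul_one]
        linarith [D.cpos ha k]
    obtain ⟨q, hqG, hqint⟩ := D.exists_mem_interior ω hω ha hG'.1 hG'.2.1.1
      (hFG' (D.a_mem_F i)) hy
    exact Set.Subset.antisymm hG'.2.1.1 (subset_of_extreme_interior hG'.2.1 hqG hqint)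

/-- classification of facets through `a` -/
lemma facet_through_a (ha : a ∈ D.C) {G : Set V} (hG : IsFacetOf (D.P a) G)
    (haG : a ∈ G) : ∃ i, G = D.F a i := by
  by_cases hex : ∃ i, ∀ x ∈ G, ⟪x - a, ω i⟫_ℝ = 0
  · obtain ⟨i, hi⟩ := hex
    refine ⟨i, ?_⟩
    have hGF : G ⊆ D.F a i := fun x hx =>
      D.P_inter_hyperplane_subset_F ω hω ha i (hG.1.2.1.1 hx) (hi x hx)
    rcases hG.2.2 (D.F a i) (D.isFaceOf_F ω hω ha i) hGF with h | h
    · exact h.symm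
    · exact absurd h (D.F_ne_P ω hω ha i)
  · exfalso
    push_neg at hex
    have hy : ∀ k, ∃ y ∈ G, ⟪y - a, ω k⟫_ℝ < 0 := by
      intro k
      obtain ⟨y, hyG, hyne⟩ := hex k
      exact ⟨y, hyG, lt_of_le_of_ne (D.P_subset_halfspace ω hω ha k (hG.1.2.1.1 hyG)) hyne⟩
    obtain ⟨q, hqG, hqint⟩ := D.exists_mem_interior ω hω ha hG.1.1 hG.1.2.1.1 haG hy
    exact hG.2.1 (Set.Subset.antisymm hG.1.2.1.1
      (subset_of_extreme_interior hG.1.2.1 hqG hqint))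

/-- the map `i ↦ F a i` is injective -/
lemma F_injective (ha : a ∈ D.C) : Function.Injective (D.F a) := by
  intro i j h
  by_contra hij
  have hmem : D.sref i a ∈ D.F a j := D.sref_a_mem_F (a := a) hij
  rw [← h] at hmem
  have h2 := D.F_subset_hyperplane ω hω i hmem
  simp only [Set.mem_setOf_eq] at h2
  rw [D.sref_a_coord ω hω i i, if_pos rfl, mul_one] at h2
  linarith [D.cpos ha i]

end Omega

/- ## transport under the Weyl group -/

omit D in
lemma image_image_inv (g : V ≃ₗ[ℝ] V) (S : Set V) : g '' ((g⁻¹ : V ≃ₗ[ℝ] V) '' S) = S := by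
  show ⇑g '' (⇑g.symm '' S) = S
  rw [← Set.image_comp]
  have : ⇑g ∘ ⇑g.symm = id := by
    funext x
    exact g.apply_symm_apply x
  rw [this, Set.image_id]

omit D in
lemma image_inv_image (g : V ≃ₗ[ℝ] V) (S : Set V) : (g⁻¹ : V ≃ₗ[ℝ] V) '' (g '' S) = S := by
  show ⇑g.symm '' (⇑g '' S) = S
  rw [← Set.image_comp]
  have : ⇑g.symm ∘ ⇑g = id := by
    funext x
    exact g.symm_apply_apply x
  rw [this, Set.image_id]

lemma image_orbit {g : V ≃ₗ[ℝ] V} (hg : g ∈ D.WK Set.univ) (a : V) :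
    g '' D.orbit Set.univ a = D.orbit Set.univ a := by
  ext x
  constructor
  · rintro ⟨y, ⟨w, hw, rfl⟩, rfl⟩
    exact ⟨g * w, Subgroup.mul_mem _ hg hw, rfl⟩
  · rintro ⟨w, hw, rfl⟩
    refine ⟨(g⁻¹ * w) a, ⟨g⁻¹ * w, Subgroup.mul_mem _ (Subgroup.inv_mem _ hg) hw, rfl⟩, ?_⟩
    show (g * (g⁻¹ * w)) a = w a
    rw [← mul_assoc, mul_inv_cancel, one_mul]

lemma image_P {g : V ≃ₗ[ℝ] V} (hg : g ∈ D.WK Set.univ) (a : V) :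
    g '' D.P a = D.P a := by
  show ⇑g '' (convexHull ℝ (D.orbit Set.univ a)) = _
  have : ⇑g = ⇑(g.toLinearMap) := rfl
  rw [this, LinearMap.image_convexHull, ← this, D.image_orbit hg a]
  rfl

lemma isFaceOf_image {g : V ≃ₗ[ℝ] V} (hg : g ∈ D.WK Set.univ) {a : V} {G : Set V}
    (hG : IsFaceOf (D.P a) G) : IsFaceOf (D.P a) (g '' G) := by
  obtain ⟨hconv, hext, hne⟩ := hG
  refine ⟨?_, ⟨?_, ?_⟩, hne.image g⟩
  · exact hconv.linear_image g.toLinearMap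
  · rw [← D.image_P hg a]
    exact Set.image_mono hext.1
  · intro x1 hx1 x2 hx2 x hxG hseg
    obtain ⟨c1, c2, hc1, hc2, hc12, hcx⟩ := hseg
    obtain ⟨y, hyG, rfl⟩ := hxG
    have hx1P : g⁻¹ x1 ∈ D.P a := by
      rw [← D.image_P hg a] at hx1
      obtain ⟨z, hz, rfl⟩ := hx1
      rwa [show g⁻¹ (g z) = z from g.symm_apply_apply z]
    have hx2P : g⁻¹ x2 ∈ D.P a := by
      rw [← D.image_P hg a] at hx2
      obtain ⟨z, hz, rfl⟩ := hx2
      rwa [show g⁻¹ (g z) = z from g.symm_apply_apply z]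
    have hyseg : y ∈ openSegment ℝ (g⁻¹ x1) (g⁻¹ x2) := by
      refine ⟨c1, c2, hc1, hc2, hc12, ?_⟩
      apply g.injective
      have e1 : g (g⁻¹ x1) = x1 := g.apply_symm_apply x1
      have e2 : g (g⁻¹ x2) = x2 := g.apply_symm_apply x2
      rw [map_add, map_smul, map_smul, e1, e2, hcx]
    have h1 := hext.2 hx1P hx2P hyG hyseg
    rw [show x1 = g (g⁻¹ x1) from (g.apply_symm_apply x1).symm]
    exact Set.mem_image_of_mem _ h1

lemma isFacetOf_image {g : V ≃ₗ[ℝ] V} (hg : g ∈ D.WK Set.univ) {a : V} {G : Set V}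
    (hG : IsFacetOf (D.P a) G) : IsFacetOf (D.P a) (g '' G) := by
  obtain ⟨hface, hne, hmax⟩ := hG
  refine ⟨D.isFaceOf_image hg hface, ?_, ?_⟩
  · intro h
    apply hne
    have hG2 : G = (g⁻¹ : V ≃ₗ[ℝ] V) '' (g '' G) := (image_inv_image g G).symm
    rw [hG2, h]
    exact D.image_P (Subgroup.inv_mem _ hg) a
  · intro G'' hG'' hsub
    have hginv : g⁻¹ ∈ D.WK Set.univ := Subgroup.inv_mem _ hg
    have hsub' : G ⊆ (g⁻¹ : V ≃ₗ[ℝ] V) '' G'' := by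
      intro x hx
      exact ⟨g x, hsub (Set.mem_image_of_mem _ hx), g.symm_apply_apply x⟩
    rcases hmax ((g⁻¹ : V ≃ₗ[ℝ] V) '' G'') (D.isFaceOf_image hginv hG'') hsub' with h | h
    · left
      rw [← image_image_inv g G'', h]
    · right
      rw [← image_image_inv g G'', h]
      exact D.image_P hg a

end RootSystemData
namespace RootSystemData

variable {V : Type} [NormedAddCommGroup V] [InnerProductSpace ℝ V] {n : ℕ}
variable (D : RootSystemData V n)

section Omega

variable (ω : Fin n → V) (hω : ∀ i j, ⟪ω i, D.α j⟫_ℝ = if i = j then 1 else 0)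
variable {a : V}

include hω

lemma facets_through_vertex (ha : a ∈ D.C) {v : V} (hv : v ∈ Set.extremePoints ℝ (D.P a)) :
    {G : Set V | IsFacetOf (D.P a) G ∧ v ∈ G}.ncard = n := by
  have hvorb : v ∈ D.orbit Set.univ a := extremePoints_convexHull_subset hv
  obtain ⟨g, hg, rfl⟩ := hvorb
  have hset : {G : Set V | IsFacetOf (D.P a) G ∧ g a ∈ G}
      = (Set.image ⇑g) '' {G : Set V | IsFacetOf (D.P a) G ∧ a ∈ G} := by
    ext G'
    constructor
    · rintro ⟨hfac, hmem⟩
      refine ⟨(g⁻¹ : V ≃ₗ[ℝ] V) '' G',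
        ⟨D.isFacetOf_image (Subgroup.inv_mem _ hg) hfac,
          ⟨g a, hmem, g.symm_apply_apply a⟩⟩, image_image_inv g G'⟩
    · rintro ⟨G, ⟨hfac, haG⟩, rfl⟩
      exact ⟨D.isFacetOf_image hg hfac, Set.mem_image_of_mem _ haG⟩
  rw [hset, Set.ncard_image_of_injective _ (Set.image_injective.2 g.injective)]
  have hset2 : {G : Set V | IsFacetOf (D.P a) G ∧ a ∈ G} = Set.range (D.F a) := by
    ext G
    constructor
    · rintro ⟨hfac, haG⟩
      obtain ⟨i, rfl⟩ := D.facet_through_a ω hω ha hfac haG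
      exact ⟨i, rfl⟩
    · rintro ⟨i, rfl⟩
      exact ⟨D.isFacetOf_F ω hω ha i, D.a_mem_F i⟩
  rw [hset2, ← Set.image_univ, Set.ncard_image_of_injective _ (D.F_injective ω hω ha),
    Set.ncard_univ, Nat.card_eq_fintype_card, Fintype.card_fin]

end Omega

end RootSystemData


/-- The vertex `a` of the Weyl polytope `P = Conv(W(a))` lies on exactly the `n` facets
`F_i = Conv(W_{[n]∖{i}}(a))`, each supported by the affine hyperplane
`{x : ⟨x − a, ω_i∨⟩ = 0}` with inward normal `−ω_i∨`; hence `P` is a simple polytope. -/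
theorem stmt_15 {V : Type} [NormedAddCommGroup V] [InnerProductSpace ℝ V] {n : ℕ}
    (D : RootSystemData V n) (ω : Fin n → V)
    (hω : ∀ i j, ⟪ω i, D.α j⟫_ℝ = if i = j then 1 else 0)
    (a : V) (ha : a ∈ D.C) :
    (∀ i, D.F a i ⊆ {x | ⟪x - a, ω i⟫_ℝ = 0} ∧ D.P a ⊆ {x | ⟪x - a, ω i⟫_ℝ ≤ 0}) ∧
    (∀ i, IsFacetOf (D.P a) (D.F a i)) ∧
    Function.Injective (D.F a) ∧
    (∀ G : Set V, IsFacetOf (D.P a) G → a ∈ G → ∃ i, G = D.F a i) ∧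
    (∀ v ∈ Set.extremePoints ℝ (D.P a), {G : Set V | IsFacetOf (D.P a) G ∧ v ∈ G}.ncard = n) := by
  refine ⟨?_, ?_, ?_, ?_, ?_⟩
  · intro i
    exact ⟨D.F_subset_hyperplane ω hω i, D.P_subset_halfspace ω hω ha i⟩
  · intro i
    exact D.isFacetOf_F ω hω ha i
  · exact D.F_injective ω hω ha
  · intro G hG haG
    exact D.facet_through_a ω hω ha hG haG
  · intro v hv
    exact D.facets_through_vertex ω hω ha hv
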